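/- arXiv:1308.2885 — 3 statements merged into one kernel-verified Lean document; each statement's English description precedes it below -/
import Mathlib

section
/- (Fact 1) Let n ≥ 1 and let p ∈ ℤⁿ have all coordinates nonnegative. There exists at least one linear monotone discrete path from the origin to p, i.e., a monotone discrete path q₀, …, q_k from 0 to p such that for every point q_i of the path, the closed axis-aligned unit cube centered at q_i intersects the straight line segment joining 0 to p. -/
/-- The natural embedding of a lattice point of `ℤⁿ` into Euclidean space `ℝⁿ`. -/
noncomputable def latticeToE (n : ℕ) (q : Fin n → ℤ) : EuclideanSpace ℝ (Fin n) :=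
  WithLp.toLp 2 (fun j => (q j : ℝ))

/-- The voxel of a lattice point `h ∈ ℤⁿ`: the closed axis-aligned unit hypercube
centered at `h`. -/
def voxel (n : ℕ) (h : Fin n → ℤ) : Set (EuclideanSpace ℝ (Fin n)) :=
  {x | ∀ j, |x j - (h j : ℝ)| ≤ 1 / 2}

/-- Invariant: `q` lies between `0` and `p` coordinatewise, and some point `t • p`
of the segment lies in the voxel of `q`. -/
def GoodPt (n : ℕ) (p q : Fin n → ℤ) : Prop :=
  (∀ j, 0 ≤ q j ∧ q j ≤ p j) ∧
  ∃ t : ℝ, 0 ≤ t ∧ t ≤ 1 ∧ ∀ j, |t * (p j : ℝ) - (q j : ℝ)| ≤ 1 / 2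

lemma goodPt_step {n : ℕ} {p q : Fin n → ℤ} (hg : GoodPt n p q) (hne : q ≠ p) :
    ∃ j, q j < p j ∧ GoodPt n p (q + Pi.single j 1) := by
  obtain ⟨hb, t0, ht00, ht01, ht0⟩ := hg
  have hex : ∃ j, q j < p j := by
    by_contra h
    push_neg at h
    exact hne (funext fun j => le_antisymm (hb j).2 (h j))
  obtain ⟨jex, hjex⟩ := hex
  obtain ⟨j0, hj0mem, hj0min⟩ := Finset.exists_min_image
    (Finset.univ.filter fun j => q j < p j)
    (fun j => ((q j : ℝ) + 1 / 2) / (p j : ℝ))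
    ⟨jex, by simp [hjex]⟩
  simp only [Finset.mem_filter, Finset.mem_univ, true_and] at hj0mem
  have hj0min' : ∀ j, q j < p j →
      ((q j0 : ℝ) + 1 / 2) / (p j0 : ℝ) ≤ ((q j : ℝ) + 1 / 2) / (p j : ℝ) := by
    intro j hj
    exact hj0min j (by simp [hj])
  set t1 : ℝ := ((q j0 : ℝ) + 1 / 2) / (p j0 : ℝ) with ht1def
  have hpj0 : (1 : ℤ) ≤ p j0 := by
    have := (hb j0).1
    omega
  have hpj0R : (1 : ℝ) ≤ (p j0 : ℝ) := by exact_mod_cast hpj0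
  have hpj0pos : (0 : ℝ) < (p j0 : ℝ) := by linarith
  have hqj0 : (q j0 : ℝ) + 1 ≤ (p j0 : ℝ) := by
    have : q j0 + 1 ≤ p j0 := hj0mem
    exact_mod_cast this
  -- positivity of p j for any j with q j < p j
  have hppos : ∀ j, q j < p j → (0 : ℝ) < (p j : ℝ) := by
    intro j hj
    have h1 : (1 : ℤ) ≤ p j := by have := (hb j).1; omega
    have : (1 : ℝ) ≤ (p j : ℝ) := by exact_mod_cast h1
    linarith
  -- t0 ≤ t1
  have ht01' : t0 ≤ t1 := by
    rw [ht1def, le_div_iff₀ (hppos j0 hj0mem)]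
    have := abs_le.1 (ht0 j0)
    linarith [this.1, this.2]
  have ht1nonneg : 0 ≤ t1 := le_trans ht00 ht01'
  have ht1le1 : t1 ≤ 1 := by
    rw [ht1def, div_le_one hpj0pos]
    linarith
  have ht1j0 : t1 * (p j0 : ℝ) = (q j0 : ℝ) + 1 / 2 := by
    rw [ht1def]
    field_simp
  refine ⟨j0, hj0mem, ⟨?_, t1, ht1nonneg, ht1le1, ?_⟩⟩
  · intro j
    rcases eq_or_ne j j0 with rfl | hjne
    · simp only [Pi.add_apply, Pi.single_eq_same]
      have := (hb j).1
      omega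
    · simp only [Pi.add_apply, Pi.single_eq_of_ne hjne]
      have := hb j
      omega
  · intro j
    rcases eq_or_ne j j0 with rfl | hjne
    · simp only [Pi.add_apply, Pi.single_eq_same]
      push_cast
      rw [ht1j0, abs_le]
      constructor <;> linarith
    · simp only [Pi.add_apply, Pi.single_eq_of_ne hjne]
      push_cast
      rcases eq_or_lt_of_le (hb j).2 with heq | hlt
      · -- q j = p j
        have hpjR : (0 : ℝ) ≤ (p j : ℝ) := by
          have := le_trans (hb j).1 (hb j).2
          exact_mod_cast this
        have hupper : t1 * (p j : ℝ) ≤ (q j : ℝ) := by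
          calc t1 * (p j : ℝ) ≤ 1 * (p j : ℝ) := by
                exact mul_le_mul_of_nonneg_right ht1le1 hpjR
            _ = (p j : ℝ) := by ring
            _ = (q j : ℝ) := by exact_mod_cast heq.symm
        have hlower : (q j : ℝ) - 1 / 2 ≤ t1 * (p j : ℝ) := by
          have h1 := (abs_le.1 (ht0 j)).1
          have h2 : t0 * (p j : ℝ) ≤ t1 * (p j : ℝ) :=
            mul_le_mul_of_nonneg_right ht01' hpjR
          linarith
        rw [abs_le]
        constructor <;> linarith
      · -- q j < p j
        have hpj : (0 : ℝ) < (p j : ℝ) := hppos j hlt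
        have hupper : t1 * (p j : ℝ) ≤ (q j : ℝ) + 1 / 2 := by
          have := hj0min' j hlt
          rw [ht1def] at this ⊢
          calc ((q j0 : ℝ) + 1 / 2) / (p j0 : ℝ) * (p j : ℝ)
              ≤ ((q j : ℝ) + 1 / 2) / (p j : ℝ) * (p j : ℝ) :=
                mul_le_mul_of_nonneg_right this (le_of_lt hpj)
            _ = (q j : ℝ) + 1 / 2 := by field_simp
        have hlower : (q j : ℝ) - 1 / 2 ≤ t1 * (p j : ℝ) := by
          have h1 := (abs_le.1 (ht0 j)).1
          have h2 : t0 * (p j : ℝ) ≤ t1 * (p j : ℝ) :=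
            mul_le_mul_of_nonneg_right ht01' (le_of_lt hpj)
          linarith
        rw [abs_le]
        constructor <;> linarith

lemma path_aux (n : ℕ) (p : Fin n → ℤ) :
    ∀ m : ℕ, ∀ q0 : Fin n → ℤ, GoodPt n p q0 → (∑ j, (p j - q0 j)) = (m : ℤ) →
    ∃ (k : ℕ) (q : Fin (k + 1) → (Fin n → ℤ)),
      q 0 = q0 ∧ q (Fin.last k) = p ∧
      (∀ i : Fin k, ∃ j : Fin n, q i.succ = q i.castSucc + Pi.single j 1) ∧
      (∀ i : Fin (k + 1), GoodPt n p (q i)) := by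
  intro m
  induction m with
  | zero =>
    intro q0 hg hsum
    have hq0 : q0 = p := by
      have hz : ∀ j ∈ Finset.univ, p j - q0 j = 0 := by
        rw [← Finset.sum_eq_zero_iff_of_nonneg (fun j _ => by
          have := (hg.1 j).2; omega)]
        simpa using hsum
      funext j
      have := hz j (Finset.mem_univ j)
      omega
    subst hq0
    exact ⟨0, fun _ => q0, rfl, rfl, fun i => i.elim0, fun _ => hg⟩
  | succ m ih =>
    intro q0 hg hsum
    have hne : q0 ≠ p := by
      rintro rfl
      simp at hsum
      omega
    obtain ⟨j, hlt, hg'⟩ := goodPt_step hg hne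
    set q1 : Fin n → ℤ := q0 + Pi.single j 1 with hq1
    have hsum' : (∑ j', (p j' - q1 j')) = (m : ℤ) := by
      have hd : ∀ j' : Fin n, p j' - q1 j'
          = (p j' - q0 j') - (Pi.single j 1 : Fin n → ℤ) j' := fun j' => by
        simp only [hq1, Pi.add_apply]; ring
      rw [Finset.sum_congr rfl (fun j' _ => hd j'), Finset.sum_sub_distrib,
        Finset.sum_pi_single']
      simp only [Finset.mem_univ, if_true]
      rw [hsum]
      push_cast
      ring
    obtain ⟨k, q, h0, hl, hstep, hgood⟩ := ih _ hg' hsum'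
    refine ⟨k + 1, Fin.cons q0 q, Fin.cons_zero _ _, ?_, ?_, ?_⟩
    · rw [← Fin.succ_last, Fin.cons_succ]
      exact hl
    · intro i
      induction i using Fin.cases with
      | zero =>
        refine ⟨j, ?_⟩
        rw [Fin.castSucc_zero, Fin.cons_zero, Fin.cons_succ, h0]
      | succ i' =>
        obtain ⟨j', hj'⟩ := hstep i'
        refine ⟨j', ?_⟩
        rw [← Fin.succ_castSucc, Fin.cons_succ, Fin.cons_succ]
        exact hj'
    · intro i
      induction i using Fin.cases with
      | zero => simpa using hg
      | succ i' => simpa using hgood i'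

/-- (Fact 1) For every point `p ∈ ℤⁿ` with nonnegative coordinates there exists a
linear monotone discrete path from the origin to `p`: a monotone discrete path
each of whose points has its voxel intersecting the segment joining `0` to `p`. -/
theorem exists_linear_monotone_path (n : ℕ) (hn : 1 ≤ n)
    (p : Fin n → ℤ) (hp : ∀ j, 0 ≤ p j) :
    ∃ (k : ℕ) (q : Fin (k + 1) → (Fin n → ℤ)),
      q 0 = 0 ∧ q (Fin.last k) = p ∧
      (∀ i : Fin k, ∃ j : Fin n, q i.succ = q i.castSucc + Pi.single j 1) ∧
      ∀ i : Fin (k + 1),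
        (voxel n (q i) ∩ segment ℝ (0 : EuclideanSpace ℝ (Fin n)) (latticeToE n p)).Nonempty := by
  have hg0 : GoodPt n p 0 := by
    refine ⟨fun j => ⟨le_refl 0, hp j⟩, 0, le_refl 0, zero_le_one, fun j => by simp⟩
  have hsumnn : (0 : ℤ) ≤ ∑ j, p j := Finset.sum_nonneg fun j _ => hp j
  obtain ⟨k, q, h0, hl, hstep, hgood⟩ := path_aux n p (∑ j, p j).toNat 0 hg0 (by
    simp only [Pi.zero_apply, sub_zero]
    rw [Int.toNat_of_nonneg hsumnn])
  refine ⟨k, q, h0, hl, hstep, fun i => ?_⟩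
  obtain ⟨hb, t, ht0, ht1, ht⟩ := hgood i
  refine ⟨t • latticeToE n p, fun j => ?_, ?_⟩
  · show |(t • latticeToE n p) j - (q i j : ℝ)| ≤ 1 / 2
    have : (t • latticeToE n p) j = t * (p j : ℝ) := by simp [latticeToE]
    rw [this]
    exact ht j
  · exact ⟨1 - t, t, by linarith, ht0, by ring, by simp⟩
end

section
/- (Proposition 1, geometric content) Let n ≥ 1 and let L = p₀, p₁, …, p_m be a monotone discrete path in ℤⁿ with p₀ = 0, m ≥ 2, and p_m ≠ 0. Let ℓ be the straight line through p₀ and p_m, and set r = max_{0 ≤ i ≤ m} d(p_i, ℓ). Let r* = inf over all affine lines ℓ′ in ℝⁿ of max_{0 ≤ i ≤ m} d(p_i, ℓ′) (the radius of a minimum enclosing cylinder of the point set L). Then r* ≤ r ≤ 2 r*. -/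
/-- The affine line through `x` with direction `v` in `ℝⁿ`. -/
def affLine (n : ℕ) (x v : EuclideanSpace ℝ (Fin n)) : Set (EuclideanSpace ℝ (Fin n)) :=
  {y | ∃ t : ℝ, y = x + t • v}

private lemma auxNL (α β γ C h : ℝ) (hC : 0 < C) (hh : 0 < h) (hβ : 0 ≤ β) (hγ : 0 ≤ γ)
    (hu : β^2 + γ^2 = 1) (h1 : h^2 + α^2*C^2 ≤ C^2) (h2 : h^2 + (1-α)^2*C^2 ≤ C^2)
    (t1 : β*C < h) (t2 : α*β*C + γ*h < h) : False := by
  have hα0 : 0 < α := by nlinarith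
  have hA : 0 ≤ γ*h := mul_nonneg hγ hh.le
  have h3 : γ^2*h^2 < (h - α*β*C)^2 := by nlinarith
  have h4 : 0 < β*(β*(h^2+α^2*C^2) - 2*α*C*h) := by nlinarith
  have hβpos : 0 < β := by
    rcases hβ.lt_or_eq with h' | h'
    · exact h'
    · exfalso; rw [← h'] at h4; simp at h4
  have h5 : 0 < β*(h^2+α^2*C^2) - 2*α*C*h := by
    rcases mul_pos_iff.mp h4 with ⟨_, h'⟩ | ⟨h', _⟩
    · exact h'
    · linarith
  -- from h2 : h^2 + α^2*C^2 ≤ 2*α*C^2, combine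
  have h6 : h^2 + α^2*C^2 ≤ 2*α*C^2 := by nlinarith
  have h7 : β*(h^2+α^2*C^2) ≤ β*(2*α*C^2) := by
    exact mul_le_mul_of_nonneg_left h6 hβ
  have h8 : 2*α*C*(β*C) < 2*α*C*h := by
    exact mul_lt_mul_of_pos_left t1 (by positivity)
  nlinarith

private lemma extentLB (α β γ C h : ℝ) (hC : 0 < C) (hh : 0 < h) (hu : β^2+γ^2 = 1)
    (h1 : h^2 + α^2*C^2 ≤ C^2) (h2 : h^2 + (1-α)^2*C^2 ≤ C^2) :
    h ≤ max |β*C| (max |α*β*C + γ*h| |(1-α)*β*C - γ*h|) := by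
  by_contra hcon
  push_neg at hcon
  have e1 : |β*C| < h := lt_of_le_of_lt (le_max_left _ _) hcon
  have e2 : |α*β*C + γ*h| < h :=
    lt_of_le_of_lt (le_trans (le_max_left _ _) (le_max_right _ _)) hcon
  have e3 : |(1-α)*β*C - γ*h| < h :=
    lt_of_le_of_lt (le_trans (le_max_right _ _) (le_max_right _ _)) hcon
  obtain ⟨e1a, e1b⟩ := abs_lt.mp e1
  obtain ⟨e2a, e2b⟩ := abs_lt.mp e2
  obtain ⟨e3a, e3b⟩ := abs_lt.mp e3
  have h2' : h^2 + (1-(1-α))^2*C^2 ≤ C^2 := by ring_nf; ring_nf at h1; linarith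
  rcases le_or_gt 0 β with hβ | hβ <;> rcases le_or_gt 0 γ with hγ | hγ
  · exact auxNL α β γ C h hC hh hβ hγ hu h1 h2 (by linarith) (by linarith)
  · exact auxNL (1-α) β (-γ) C h hC hh hβ (by linarith) (by ring_nf; ring_nf at hu; linarith)
      h2 h2' (by linarith) (by linarith)
  · exact auxNL (1-α) (-β) γ C h hC hh (by linarith) hγ (by ring_nf; ring_nf at hu; linarith)
      h2 h2' (by linarith) (by linarith)
  · exact auxNL α (-β) (-γ) C h hC hh (by linarith) (by linarith)
      (by ring_nf; ring_nf at hu; linarith) h1 h2 (by linarith) (by linarith)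

private lemma absInner_le_infDist (n : ℕ) (x v y e : EuclideanSpace ℝ (Fin n))
    (he : ‖e‖ = 1) (hev : inner ℝ v e = (0:ℝ)) :
    |(inner ℝ (y - x) e : ℝ)| ≤ Metric.infDist y (affLine n x v) := by
  have hne : (affLine n x v).Nonempty := ⟨x + (0:ℝ) • v, ⟨0, rfl⟩⟩
  refine le_of_not_gt fun hlt => ?_
  obtain ⟨z, hzm, hz⟩ := (Metric.infDist_lt_iff hne).mp hlt
  obtain ⟨t, rfl⟩ := hzm
  have h1 : (inner ℝ (y - (x + t • v)) e : ℝ) = inner ℝ (y - x) e := by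
    rw [show y - (x + t • v) = y - x - t • v by abel, inner_sub_left,
      real_inner_smul_left, hev, mul_zero, sub_zero]
  have h2 : |(inner ℝ (y - (x + t • v)) e : ℝ)| ≤ ‖y - (x + t • v)‖ := by
    calc |(inner ℝ (y - (x + t • v)) e : ℝ)| ≤ ‖y - (x + t • v)‖ * ‖e‖ :=
          abs_real_inner_le_norm _ _
      _ = ‖y - (x + t • v)‖ := by rw [he, mul_one]
  rw [dist_eq_norm] at hz
  rw [h1] at h2
  linarith


private lemma norm_unit_comb (n : ℕ) (u₁ u₂ : EuclideanSpace ℝ (Fin n)) (β γ : ℝ)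
    (hu₁ : ‖u₁‖ = 1) (hu₂ : ‖u₂‖ = 1) (hu₁₂ : inner ℝ u₁ u₂ = (0:ℝ))
    (hβγ : β^2 + γ^2 = 1) : ‖β • u₁ + γ • u₂‖ = 1 := by
  have h1 : ‖β • u₁‖ = |β| := by rw [norm_smul, Real.norm_eq_abs, hu₁, mul_one]
  have h2 : ‖γ • u₂‖ = |γ| := by rw [norm_smul, Real.norm_eq_abs, hu₂, mul_one]
  have h3 : (inner ℝ (β • u₁) (γ • u₂) : ℝ) = 0 := by
    rw [real_inner_smul_left, real_inner_smul_right, hu₁₂]; ring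
  have he2 : ‖β • u₁ + γ • u₂‖^2 = 1 := by
    rw [norm_add_sq_real, h1, h2, h3, sq_abs, sq_abs]
    rw [← hβγ]; ring
  have h4 := norm_nonneg (β • u₁ + γ • u₂)
  nlinarith


private lemma pick_unit (b₁ b₂ : ℝ) :
    ∃ β γ : ℝ, β^2 + γ^2 = 1 ∧ β*b₁ + γ*b₂ = 0 := by
  by_cases hb : b₁ = 0 ∧ b₂ = 0
  · exact ⟨0, 1, by norm_num, by rw [hb.1, hb.2]; ring⟩
  · have hspos : 0 < b₁^2 + b₂^2 := by
      rcases not_and_or.mp hb with h' | h' <;> positivity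
    have hspos' : 0 < Real.sqrt (b₁^2 + b₂^2) := Real.sqrt_pos.mpr hspos
    have hs2 : (Real.sqrt (b₁^2 + b₂^2))^2 = b₁^2 + b₂^2 := Real.sq_sqrt hspos.le
    refine ⟨b₂/Real.sqrt (b₁^2 + b₂^2), -b₁/Real.sqrt (b₁^2 + b₂^2), ?_, ?_⟩
    · field_simp
      linarith
    · field_simp
      ring

private lemma core_lemma (n : ℕ) (c q x v : EuclideanSpace ℝ (Fin n)) (hc : c ≠ 0)
    (hq1 : ‖q‖ ≤ ‖c‖) (hq2 : ‖q - c‖ ≤ ‖c‖) :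
    Metric.infDist q (affLine n 0 c) ≤
      2 * max (Metric.infDist 0 (affLine n x v))
        (max (Metric.infDist q (affLine n x v)) (Metric.infDist c (affLine n x v))) := by
  have hC : 0 < ‖c‖ := norm_pos_iff.mpr hc
  obtain ⟨C, hCdef⟩ : ∃ C : ℝ, C = ‖c‖ := ⟨_, rfl⟩
  rw [← hCdef] at hq1 hq2 hC
  obtain ⟨α, hα⟩ : ∃ α : ℝ, α = (inner ℝ q c : ℝ) / C^2 := ⟨_, rfl⟩
  obtain ⟨w, hw⟩ : ∃ w, w = q - α • c := ⟨_, rfl⟩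
  have hcc : (inner ℝ c c : ℝ) = C^2 := by rw [hCdef]; exact real_inner_self_eq_norm_sq c
  have hwc : (inner ℝ w c : ℝ) = 0 := by
    rw [hw, inner_sub_left, real_inner_smul_left, hcc, hα]
    field_simp
    ring
  have hcw : (inner ℝ c w : ℝ) = 0 := by rw [real_inner_comm]; exact hwc
  have hzmem : α • c ∈ affLine n 0 c := ⟨α, by rw [zero_add]⟩
  have hqz : Metric.infDist q (affLine n 0 c) ≤ ‖w‖ := by
    have := Metric.infDist_le_dist_of_mem hzmem (x := q)
    rw [dist_eq_norm] at this
    rw [hw]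
    exact this
  have hM0 : (0:ℝ) ≤ max (Metric.infDist 0 (affLine n x v))
      (max (Metric.infDist q (affLine n x v)) (Metric.infDist c (affLine n x v))) :=
    le_trans Metric.infDist_nonneg (le_max_left _ _)
  rcases eq_or_ne w 0 with hw0 | hwne
  · rw [hw0] at hqz
    simp only [norm_zero] at hqz
    linarith
  · have hh : 0 < ‖w‖ := norm_pos_iff.mpr hwne
    obtain ⟨h, hhdef⟩ : ∃ h : ℝ, h = ‖w‖ := ⟨_, rfl⟩
    rw [← hhdef] at hqz hh
    have hq_decomp : q = α • c + w := by rw [hw]; abel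
    have hzw : (inner ℝ (α • c) w : ℝ) = 0 := by rw [real_inner_smul_left, hcw, mul_zero]
    have hnz : ‖α • c‖^2 = α^2*C^2 := by
      rw [norm_smul, Real.norm_eq_abs, mul_pow, sq_abs, hCdef]
    have hnormq : ‖q‖^2 = α^2*C^2 + h^2 := by
      rw [hq_decomp, norm_add_sq_real, hzw, hnz, hhdef]; ring
    have hnormqc : ‖q - c‖^2 = (1-α)^2*C^2 + h^2 := by
      have hqc : q - c = (α-1) • c + w := by
        rw [hw, sub_smul, one_smul]; abel
      have hin : (inner ℝ ((α-1) • c) w : ℝ) = 0 := by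
        rw [real_inner_smul_left, hcw, mul_zero]
      rw [hqc, norm_add_sq_real, hin, norm_smul, Real.norm_eq_abs, mul_pow, sq_abs,
        ← hCdef, hhdef]
      ring
    have h1 : h^2 + α^2*C^2 ≤ C^2 := by
      have := pow_le_pow_left₀ (norm_nonneg q) hq1 2
      rw [hnormq] at this; linarith
    have h2 : h^2 + (1-α)^2*C^2 ≤ C^2 := by
      have := pow_le_pow_left₀ (norm_nonneg (q - c)) hq2 2
      rw [hnormqc] at this; linarith
    obtain ⟨u₁, hu₁def⟩ : ∃ u₁, u₁ = C⁻¹ • c := ⟨_, rfl⟩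
    obtain ⟨u₂, hu₂def⟩ : ∃ u₂, u₂ = h⁻¹ • w := ⟨_, rfl⟩
    have hu₁ : ‖u₁‖ = 1 := by
      rw [hu₁def, norm_smul, Real.norm_eq_abs, abs_of_pos (inv_pos.mpr hC), ← hCdef]
      field_simp
    have hu₂ : ‖u₂‖ = 1 := by
      rw [hu₂def, norm_smul, Real.norm_eq_abs, abs_of_pos (inv_pos.mpr hh), ← hhdef]
      field_simp
    have hu₁₂ : (inner ℝ u₁ u₂ : ℝ) = 0 := by
      rw [hu₁def, hu₂def, real_inner_smul_left, real_inner_smul_right, hcw]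
      ring
    obtain ⟨β, γ, hβγ, hev0⟩ := pick_unit (inner ℝ v u₁ : ℝ) (inner ℝ v u₂ : ℝ)
    have hev : (inner ℝ v (β • u₁ + γ • u₂) : ℝ) = 0 := by
      rw [inner_add_right, real_inner_smul_right, real_inner_smul_right]
      exact hev0
    have hnorme : ‖β • u₁ + γ • u₂‖ = 1 := norm_unit_comb n u₁ u₂ β γ hu₁ hu₂ hu₁₂ hβγ
    obtain ⟨e, he_def⟩ : ∃ e, e = β • u₁ + γ • u₂ := ⟨_, rfl⟩
    rw [← he_def] at hnorme hev
    have hcu₁ : (inner ℝ c u₁ : ℝ) = C := by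
      rw [hu₁def, real_inner_smul_right, hcc]; field_simp
    have hcu₂ : (inner ℝ c u₂ : ℝ) = 0 := by
      rw [hu₂def, real_inner_smul_right, hcw]; ring
    have hwu₁ : (inner ℝ w u₁ : ℝ) = 0 := by
      rw [hu₁def, real_inner_smul_right, hwc]; ring
    have hwu₂ : (inner ℝ w u₂ : ℝ) = h := by
      rw [hu₂def, real_inner_smul_right, real_inner_self_eq_norm_sq, ← hhdef]
      field_simp
    have hce : (inner ℝ c e : ℝ) = β*C := by
      rw [he_def, inner_add_right, real_inner_smul_right, real_inner_smul_right, hcu₁, hcu₂]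
      ring
    have hwe : (inner ℝ w e : ℝ) = γ*h := by
      rw [he_def, inner_add_right, real_inner_smul_right, real_inner_smul_right, hwu₁, hwu₂]
      ring
    have hqe : (inner ℝ q e : ℝ) = α*β*C + γ*h := by
      rw [hq_decomp, inner_add_left, real_inner_smul_left, hce, hwe]
      ring
    have hcqe : (inner ℝ (c - q) e : ℝ) = (1-α)*β*C - γ*h := by
      rw [inner_sub_left, hce, hqe]; ring
    have d0 := absInner_le_infDist n x v 0 e hnorme hev
    have dq := absInner_le_infDist n x v q e hnorme hev
    have dc := absInner_le_infDist n x v c e hnorme hev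
    have hd0M : Metric.infDist 0 (affLine n x v) ≤ max (Metric.infDist 0 (affLine n x v))
        (max (Metric.infDist q (affLine n x v)) (Metric.infDist c (affLine n x v))) :=
      le_max_left _ _
    have hdqM : Metric.infDist q (affLine n x v) ≤ max (Metric.infDist 0 (affLine n x v))
        (max (Metric.infDist q (affLine n x v)) (Metric.infDist c (affLine n x v))) :=
      le_trans (le_max_left _ _) (le_max_right _ _)
    have hdcM : Metric.infDist c (affLine n x v) ≤ max (Metric.infDist 0 (affLine n x v))
        (max (Metric.infDist q (affLine n x v)) (Metric.infDist c (affLine n x v))) :=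
      le_trans (le_max_right _ _) (le_max_right _ _)
    have pair : ∀ a b : EuclideanSpace ℝ (Fin n),
        |(inner ℝ (a - b) e : ℝ)| ≤ |(inner ℝ (a - x) e : ℝ)| + |(inner ℝ (b - x) e : ℝ)| := by
      intro a b
      have heq : (inner ℝ (a - b) e : ℝ) = inner ℝ (a - x) e - inner ℝ (b - x) e := by
        rw [← inner_sub_left]
        congr 1
        abel
      rw [heq]
      exact abs_sub _ _
    set M := max (Metric.infDist 0 (affLine n x v))
        (max (Metric.infDist q (affLine n x v)) (Metric.infDist c (affLine n x v))) with hM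
    have b1 : |β*C| ≤ 2*M := by
      have hp := pair c 0
      rw [sub_zero, hce] at hp
      calc |β*C| ≤ _ + _ := hp
        _ ≤ M + M := add_le_add (le_trans dc hdcM) (le_trans d0 hd0M)
        _ = 2*M := by ring
    have b2 : |α*β*C + γ*h| ≤ 2*M := by
      have hp := pair q 0
      rw [sub_zero, hqe] at hp
      calc |α*β*C + γ*h| ≤ _ + _ := hp
        _ ≤ M + M := add_le_add (le_trans dq hdqM) (le_trans d0 hd0M)
        _ = 2*M := by ring
    have b3 : |(1-α)*β*C - γ*h| ≤ 2*M := by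
      have hp := pair c q
      rw [hcqe] at hp
      calc |(1-α)*β*C - γ*h| ≤ _ + _ := hp
        _ ≤ M + M := add_le_add (le_trans dc hdcM) (le_trans dq hdqM)
        _ = 2*M := by ring
    have hext := extentLB α β γ C h hC hh hβγ h1 h2
    have hfin : h ≤ 2*M := le_trans hext (max_le b1 (max_le b2 b3))
    exact le_trans hqz hfin

private lemma normE_le (n : ℕ) (a b : EuclideanSpace ℝ (Fin n))
    (h : ∀ j, |a j| ≤ |b j|) : ‖a‖ ≤ ‖b‖ := by
  rw [EuclideanSpace.norm_eq, EuclideanSpace.norm_eq]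
  apply Real.sqrt_le_sqrt
  apply Finset.sum_le_sum
  intro j _
  rw [Real.norm_eq_abs, Real.norm_eq_abs]
  exact pow_le_pow_left₀ (abs_nonneg _) (h j) 2

/-- (Proposition 1, geometric content) For a monotone discrete path
`L = p₀, …, p_m` in `ℤⁿ` with `p₀ = 0`, `m ≥ 2` and `p_m ≠ 0`, let `r` be the
maximum distance from the points of `L` to the line `ℓ` through `p₀` and `p_m`,
and let `r*` be the radius of a minimum enclosing cylinder of `L` (the infimum
over all affine lines of the maximum distance from the points of `L` to the
line). Then `r* ≤ r ≤ 2 r*`. -/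
theorem two_approx_min_enclosing_cylinder (n : ℕ) (hn : 1 ≤ n)
    (m : ℕ) (hm : 2 ≤ m)
    (p : Fin (m + 1) → (Fin n → ℤ)) (h0 : p 0 = 0)
    (hstep : ∀ i : Fin m, ∃ j : Fin n, p i.succ = p i.castSucc + Pi.single j 1)
    (hne : p (Fin.last m) ≠ 0)
    (r : ℝ)
    (hr : r = ⨆ i : Fin (m + 1),
      Metric.infDist (latticeToE n (p i))
        (affLine n (0 : EuclideanSpace ℝ (Fin n)) (latticeToE n (p (Fin.last m)))))
    (rstar : ℝ)
    (hrstar : rstar = sInf {s : ℝ | ∃ x v : EuclideanSpace ℝ (Fin n), v ≠ 0 ∧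
      s = ⨆ i : Fin (m + 1), Metric.infDist (latticeToE n (p i)) (affLine n x v)}) :
    rstar ≤ r ∧ r ≤ 2 * rstar := by
  have hc : latticeToE n (p (Fin.last m)) ≠ 0 := by
    intro hcz
    apply hne
    funext j
    have := congrArg (fun x => x j) hcz
    simpa [latticeToE] using this
  have mono : Monotone p := by
    apply Fin.monotone_iff_le_succ.mpr
    intro i
    obtain ⟨j, hj⟩ := hstep i
    rw [hj]
    intro k
    simp only [Pi.add_apply]
    have hsingle : (0:ℤ) ≤ (Pi.single j 1 : Fin n → ℤ) k := by
      rw [Pi.single_apply]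
      split <;> norm_num
    linarith
  have h0le : ∀ (i : Fin (m+1)) (j : Fin n), (0:ℤ) ≤ p i j := by
    intro i j
    have := mono (Fin.zero_le i) j
    rwa [h0] at this
  have hlastle : ∀ (i : Fin (m+1)) (j : Fin n), p i j ≤ p (Fin.last m) j := by
    intro i j
    exact mono (Fin.le_last i) j
  have hq1 : ∀ i : Fin (m+1), ‖latticeToE n (p i)‖ ≤ ‖latticeToE n (p (Fin.last m))‖ := by
    intro i
    apply normE_le
    intro j
    have h1 : (0:ℝ) ≤ ((p i j : ℤ) : ℝ) := by exact_mod_cast h0le i j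
    have h2 : ((p i j : ℤ) : ℝ) ≤ ((p (Fin.last m) j : ℤ) : ℝ) := by
      exact_mod_cast hlastle i j
    show |((p i j : ℤ) : ℝ)| ≤ |((p (Fin.last m) j : ℤ) : ℝ)|
    rw [abs_of_nonneg h1, abs_of_nonneg (le_trans h1 h2)]
    exact h2
  have hq2 : ∀ i : Fin (m+1),
      ‖latticeToE n (p i) - latticeToE n (p (Fin.last m))‖
        ≤ ‖latticeToE n (p (Fin.last m))‖ := by
    intro i
    apply normE_le
    intro j
    have h1 : (0:ℝ) ≤ ((p i j : ℤ) : ℝ) := by exact_mod_cast h0le i j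
    have h2 : ((p i j : ℤ) : ℝ) ≤ ((p (Fin.last m) j : ℤ) : ℝ) := by
      exact_mod_cast hlastle i j
    show |((p i j : ℤ) : ℝ) - ((p (Fin.last m) j : ℤ) : ℝ)|
      ≤ |((p (Fin.last m) j : ℤ) : ℝ)|
    rw [abs_of_nonpos (by linarith), abs_of_nonneg (le_trans h1 h2)]
    linarith
  have h00 : latticeToE n (p 0) = 0 := by
    rw [h0]
    ext j
    simp [latticeToE]
  have hrS : r ∈ {s : ℝ | ∃ x v : EuclideanSpace ℝ (Fin n), v ≠ 0 ∧
      s = ⨆ i : Fin (m + 1), Metric.infDist (latticeToE n (p i)) (affLine n x v)} :=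
    ⟨0, latticeToE n (p (Fin.last m)), hc, hr⟩
  have hSlb : ∀ s ∈ {s : ℝ | ∃ x v : EuclideanSpace ℝ (Fin n), v ≠ 0 ∧
      s = ⨆ i : Fin (m + 1), Metric.infDist (latticeToE n (p i)) (affLine n x v)},
      (0:ℝ) ≤ s := by
    rintro s ⟨x, v, hv, rfl⟩
    exact Real.iSup_nonneg fun i => Metric.infDist_nonneg
  have hbdd : BddBelow {s : ℝ | ∃ x v : EuclideanSpace ℝ (Fin n), v ≠ 0 ∧
      s = ⨆ i : Fin (m + 1), Metric.infDist (latticeToE n (p i)) (affLine n x v)} :=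
    ⟨0, hSlb⟩
  have key : ∀ s ∈ {s : ℝ | ∃ x v : EuclideanSpace ℝ (Fin n), v ≠ 0 ∧
      s = ⨆ i : Fin (m + 1), Metric.infDist (latticeToE n (p i)) (affLine n x v)},
      r ≤ 2 * s := by
    rintro s ⟨x, v, hv, rfl⟩
    rw [hr]
    apply ciSup_le
    intro i
    have hbddG : BddAbove (Set.range fun i : Fin (m+1) =>
        Metric.infDist (latticeToE n (p i)) (affLine n x v)) :=
      Set.Finite.bddAbove (Set.finite_range _)
    have hcore := core_lemma n (latticeToE n (p (Fin.last m))) (latticeToE n (p i)) x v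
      hc (hq1 i) (hq2 i)
    have hmax : max (Metric.infDist 0 (affLine n x v))
        (max (Metric.infDist (latticeToE n (p i)) (affLine n x v))
          (Metric.infDist (latticeToE n (p (Fin.last m))) (affLine n x v)))
        ≤ ⨆ i : Fin (m+1), Metric.infDist (latticeToE n (p i)) (affLine n x v) := by
      apply max_le
      · rw [← h00]
        exact le_ciSup hbddG 0
      · exact max_le (le_ciSup hbddG i) (le_ciSup hbddG (Fin.last m))
    calc Metric.infDist (latticeToE n (p i))
          (affLine n (0 : EuclideanSpace ℝ (Fin n)) (latticeToE n (p (Fin.last m))))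
        ≤ 2 * max (Metric.infDist 0 (affLine n x v))
            (max (Metric.infDist (latticeToE n (p i)) (affLine n x v))
              (Metric.infDist (latticeToE n (p (Fin.last m))) (affLine n x v))) := hcore
      _ ≤ 2 * ⨆ i : Fin (m+1),
            Metric.infDist (latticeToE n (p i)) (affLine n x v) := by linarith [hmax]
  constructor
  · rw [hrstar]
    exact csInf_le hbdd hrS
  · have h2 : r / 2 ≤ sInf {s : ℝ | ∃ x v : EuclideanSpace ℝ (Fin n), v ≠ 0 ∧
        s = ⨆ i : Fin (m + 1), Metric.infDist (latticeToE n (p i)) (affLine n x v)} := by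
      apply le_csInf ⟨r, hrS⟩
      intro s hs
      linarith [key s hs]
    rw [hrstar]
    linarith
end

section
/- (Key lower bound used in Proposition 1) Let n ≥ 1 and let p, q ∈ ℝⁿ satisfy 0 ≤ p ≤ q coordinatewise, with q ≠ 0. Let r = d(p, ℓ) be the Euclidean distance from p to the line ℓ through the origin and q. Then for every affine line ℓ′ in ℝⁿ, max{ d(0, ℓ′), d(q, ℓ′), d(p, ℓ′) } ≥ r/2. In other words, any enclosing cylinder of the three points 0, q, p has radius at least r/2. -/
private lemma key_ineq (r Q s t : ℝ) (hr : 0 ≤ r)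
    (h1 : r ^ 2 + s ^ 2 * Q ^ 2 ≤ Q ^ 2) (h2 : r ^ 2 + (1 - s) ^ 2 * Q ^ 2 ≤ Q ^ 2) :
    (r * (1 + |t| + |1 - t|)) ^ 2 ≤ 4 * (r ^ 2 + (t - s) ^ 2 * Q ^ 2) := by
  rcases le_or_gt t 0 with h | h
  · rw [abs_of_nonpos h, abs_of_nonneg (by linarith : (0:ℝ) ≤ 1 - t)]
    have hc : (0:ℝ) ≤ t ^ 2 - 2 * t := by nlinarith
    have h2' : r ^ 2 ≤ (2 * s - s ^ 2) * Q ^ 2 := by nlinarith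
    have e1 : (t ^ 2 - 2 * t) * r ^ 2 ≤ (t ^ 2 - 2 * t) * ((2 * s - s ^ 2) * Q ^ 2) :=
      mul_le_mul_of_nonneg_left h2' hc
    have e2 : (t ^ 2 - 2 * t) * ((2 * s - s ^ 2) * Q ^ 2) ≤ (t - s) ^ 2 * Q ^ 2 := by
      nlinarith [mul_nonneg (sq_nonneg ((1 - t) * (1 - s) - 1)) (sq_nonneg Q)]
    nlinarith [e1, e2]
  rcases le_or_gt t 1 with h' | h'
  · rw [abs_of_nonneg h.le, abs_of_nonneg (by linarith : (0:ℝ) ≤ 1 - t)]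
    nlinarith [mul_nonneg (sq_nonneg (t - s)) (sq_nonneg Q)]
  · rw [abs_of_nonneg h.le, abs_of_nonpos (by linarith : (1:ℝ) - t ≤ 0)]
    have hc : (0:ℝ) ≤ t ^ 2 - 1 := by nlinarith
    have h1' : r ^ 2 ≤ (1 - s ^ 2) * Q ^ 2 := by nlinarith
    have e1 : (t ^ 2 - 1) * r ^ 2 ≤ (t ^ 2 - 1) * ((1 - s ^ 2) * Q ^ 2) :=
      mul_le_mul_of_nonneg_left h1' hc
    have e2 : (t ^ 2 - 1) * ((1 - s ^ 2) * Q ^ 2) ≤ (t - s) ^ 2 * Q ^ 2 := by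
      nlinarith [mul_nonneg (sq_nonneg (t * s - 1)) (sq_nonneg Q)]
    nlinarith [e1, e2]

/-- (Key lower bound used in Proposition 1) Let `0 ≤ p ≤ q` coordinatewise with
`q ≠ 0`, and let `r` be the distance from `p` to the line through the origin and
`q`. Then any enclosing cylinder of the three points `0`, `q`, `p` has radius at
least `r/2`: for every affine line `ℓ′`,
`max {d(0,ℓ′), d(q,ℓ′), d(p,ℓ′)} ≥ r/2`. -/
theorem three_points_cylinder_lower_bound (n : ℕ) (hn : 1 ≤ n)
    (p q : EuclideanSpace ℝ (Fin n))
    (hpq : ∀ j, 0 ≤ p j ∧ p j ≤ q j) (hq : q ≠ 0)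
    (r : ℝ) (hr : r = Metric.infDist p (affLine n (0 : EuclideanSpace ℝ (Fin n)) q)) :
    ∀ x v : EuclideanSpace ℝ (Fin n), v ≠ 0 →
      r / 2 ≤
        max (max (Metric.infDist (0 : EuclideanSpace ℝ (Fin n)) (affLine n x v))
              (Metric.infDist q (affLine n x v)))
          (Metric.infDist p (affLine n x v)) := by
  intro x v hv
  have hQ : (0:ℝ) < ‖q‖ := norm_pos_iff.mpr hq
  set Q : ℝ := ‖q‖ with hQdef
  set s : ℝ := (inner ℝ p q : ℝ) / Q ^ 2 with hsdef
  have hQ2 : (0:ℝ) < Q ^ 2 := by positivity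
  have hsQ : s * Q ^ 2 = (inner ℝ p q : ℝ) := div_mul_cancel₀ _ (ne_of_gt hQ2)
  -- distance to points on the line through 0 and q
  have hdist : ∀ t : ℝ, dist p (t • q) ^ 2 = ‖p‖ ^ 2 - 2 * t * (inner ℝ p q : ℝ) + t ^ 2 * Q ^ 2 := by
    intro t
    rw [dist_eq_norm, norm_sub_sq_real, real_inner_smul_right, norm_smul, Real.norm_eq_abs,
      mul_pow, sq_abs]
    ring
  have hdist2 : ∀ t : ℝ, dist p (t • q) ^ 2
      = (‖p‖ ^ 2 - s ^ 2 * Q ^ 2) + (t - s) ^ 2 * Q ^ 2 := by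
    intro t
    rw [hdist t]
    linear_combination 2 * t * hsQ
  have hmem : ∀ t : ℝ, t • q ∈ affLine n (0 : EuclideanSpace ℝ (Fin n)) q := by
    intro t; exact ⟨t, by rw [zero_add]⟩
  have hne0 : (affLine n (0 : EuclideanSpace ℝ (Fin n)) q).Nonempty := ⟨_, hmem 0⟩
  -- r = dist p (s • q)
  have hrval : r = dist p (s • q) := by
    refine le_antisymm (hr ▸ Metric.infDist_le_dist_of_mem (hmem s)) ?_
    rw [hr]
    refine le_of_not_gt fun hlt => ?_
    obtain ⟨y, ⟨t, rfl⟩, hy⟩ := (Metric.infDist_lt_iff hne0).mp hlt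
    rw [zero_add] at hy
    have h1 := hdist2 t
    have h2 := hdist2 s
    nlinarith [dist_nonneg (x := p) (y := t • q), dist_nonneg (x := p) (y := s • q),
      mul_nonneg (sq_nonneg (t - s)) (le_of_lt hQ2)]
  have hr0 : 0 ≤ r := hr ▸ Metric.infDist_nonneg
  have hr2 : r ^ 2 = ‖p‖ ^ 2 - s ^ 2 * Q ^ 2 := by
    have := hdist2 s
    rw [← hrval] at this
    simpa using this
  -- coordinatewise facts
  have normsq : ∀ y : EuclideanSpace ℝ (Fin n), ‖y‖ ^ 2 = ∑ j, (y j) ^ 2 := by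
    intro y
    rw [← real_inner_self_eq_norm_sq, PiLp.inner_apply]
    simp [RCLike.inner_apply, sq]
  have hp_le : ‖p‖ ^ 2 ≤ Q ^ 2 := by
    rw [normsq, hQdef, normsq]
    exact Finset.sum_le_sum fun j _ => pow_le_pow_left₀ (hpq j).1 (hpq j).2 2
  have hpq_le : ‖p - q‖ ^ 2 ≤ Q ^ 2 := by
    rw [normsq, hQdef, normsq]
    refine Finset.sum_le_sum fun j _ => ?_
    have h1 := (hpq j).1
    have h2 := (hpq j).2
    have : (p - q) j = p j - q j := rfl
    rw [this]
    nlinarith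
  have key1 : r ^ 2 + s ^ 2 * Q ^ 2 ≤ Q ^ 2 := by rw [hr2]; linarith
  have key2 : r ^ 2 + (1 - s) ^ 2 * Q ^ 2 ≤ Q ^ 2 := by
    have : ‖p - q‖ ^ 2 = ‖p‖ ^ 2 - 2 * (inner ℝ p q : ℝ) + Q ^ 2 := norm_sub_sq_real p q
    nlinarith [hsQ]
  -- main argument
  rcases eq_or_lt_of_le hr0 with hr0' | hr0'
  · calc r / 2 ≤ 0 := by linarith
    _ ≤ Metric.infDist p (affLine n x v) := Metric.infDist_nonneg
    _ ≤ _ := le_max_right _ _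
  by_contra hcon
  push_neg at hcon
  have hA : Metric.infDist (0 : EuclideanSpace ℝ (Fin n)) (affLine n x v) < r / 2 :=
    lt_of_le_of_lt (le_trans (le_max_left _ _) (le_max_left _ _)) hcon
  have hB : Metric.infDist q (affLine n x v) < r / 2 :=
    lt_of_le_of_lt (le_trans (le_max_right _ _) (le_max_left _ _)) hcon
  have hC : Metric.infDist p (affLine n x v) < r / 2 :=
    lt_of_le_of_lt (le_max_right _ _) hcon
  have hne : (affLine n x v).Nonempty := ⟨x, 0, by simp⟩
  obtain ⟨a, ⟨ta, rfl⟩, ha⟩ := (Metric.infDist_lt_iff hne).mp hA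
  obtain ⟨b, ⟨tb, rfl⟩, hb⟩ := (Metric.infDist_lt_iff hne).mp hB
  obtain ⟨c, ⟨tc, rfl⟩, hc⟩ := (Metric.infDist_lt_iff hne).mp hC
  have hrQ : r ≤ Q := by nlinarith
  rcases eq_or_ne ta tb with rfl | htab
  · -- same point: dist 0 q < r ≤ Q = dist 0 q, contradiction
    have : Q < r := by
      have := dist_triangle (0 : EuclideanSpace ℝ (Fin n)) (x + ta • v) q
      have hqd : dist (0 : EuclideanSpace ℝ (Fin n)) q = Q := by
        rw [dist_eq_norm, zero_sub, norm_neg]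
      rw [hqd] at this
      rw [dist_comm] at hb
      linarith
    linarith
  · set t : ℝ := (tc - ta) / (tb - ta) with htdef
    have ht : t * (tb - ta) = tc - ta := div_mul_cancel₀ _ (sub_ne_zero.mpr (Ne.symm htab))
    have hco : x + tc • v = (1 - t) • (x + ta • v) + t • (x + tb • v) := by
      have expand : (1 - t) • (x + ta • v) + t • (x + tb • v)
          = x + (ta + t * (tb - ta)) • v := by module
      rw [expand, ht, show ta + (tc - ta) = tc by ring]
    have e2 : dist (x + tc • v) (t • q)
        ≤ |1 - t| * dist (0 : EuclideanSpace ℝ (Fin n)) (x + ta • v)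
          + |t| * dist q (x + tb • v) := by
      rw [hco, dist_eq_norm]
      have : (1 - t) • (x + ta • v) + t • (x + tb • v) - t • q
          = (1 - t) • (x + ta • v) + t • ((x + tb • v) - q) := by module
      rw [this]
      calc ‖(1 - t) • (x + ta • v) + t • ((x + tb • v) - q)‖
          ≤ ‖(1 - t) • (x + ta • v)‖ + ‖t • ((x + tb • v) - q)‖ := norm_add_le _ _
        _ = |1 - t| * ‖x + ta • v‖ + |t| * ‖(x + tb • v) - q‖ := by
            rw [norm_smul, norm_smul, Real.norm_eq_abs, Real.norm_eq_abs]
        _ = _ := by rw [dist_zero_left, dist_comm q, dist_eq_norm]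
    have hbound : dist p (t • q) < r / 2 + |1 - t| * (r / 2) + |t| * (r / 2) := by
      have tri := dist_triangle p (x + tc • v) (t • q)
      have e3 : |1 - t| * dist (0 : EuclideanSpace ℝ (Fin n)) (x + ta • v)
          ≤ |1 - t| * (r / 2) := mul_le_mul_of_nonneg_left ha.le (abs_nonneg _)
      have e4 : |t| * dist q (x + tb • v) ≤ |t| * (r / 2) :=
        mul_le_mul_of_nonneg_left hb.le (abs_nonneg _)
      linarith
    have hkey := key_ineq r Q s t hr0 key1 key2
    have hdq : dist p (t • q) ^ 2 = r ^ 2 + (t - s) ^ 2 * Q ^ 2 := by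
      rw [hdist2 t, hr2]
    have hsq : dist p (t • q) ^ 2
        < (r / 2 + |1 - t| * (r / 2) + |t| * (r / 2)) ^ 2 :=
      pow_lt_pow_left₀ hbound dist_nonneg (by norm_num)
    rw [hdq] at hsq
    have hM : (r * (1 + |t| + |1 - t|)) ^ 2
        = 4 * (r / 2 + |1 - t| * (r / 2) + |t| * (r / 2)) ^ 2 := by ring
    linarith
end
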